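/- arXiv:2311.15744 — 2 statements merged into one kernel-verified Lean document; each statement's English description precedes it below -/
import Mathlib

section
/- For any c > 0, the fraction of the volume of the unit hemisphere in ℝ^d above the hyperplane x_1 = c/√(d−1) is less than (2/c)·e^{−c²/2}. -/
open MeasureTheory Set Filter

lemma sumsq_ball_vol (n : ℕ) (hn : 1 ≤ n) (r : ℝ) :
    volume {y : Fin n → ℝ | ∑ i, (y i)^2 ≤ r}
      = ENNReal.ofReal (Real.sqrt r ^ n) * volume (Metric.ball (0 : EuclideanSpace ℝ (Fin n)) 1) := by
  have he : MeasurePreserving (MeasurableEquiv.toLp 2 (Fin n → ℝ)) volume volume :=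
    (EuclideanSpace.volume_preserving_symm_measurableEquiv_toLp (Fin n)).symm
  rcases le_or_gt 0 r with hr | hr
  · have hset : {y : Fin n → ℝ | ∑ i, (y i)^2 ≤ r}
        = (MeasurableEquiv.toLp 2 (Fin n → ℝ)) ⁻¹' (Metric.closedBall (0 : EuclideanSpace ℝ (Fin n)) (Real.sqrt r)) := by
      ext y
      simp only [Set.mem_preimage, Metric.mem_closedBall, dist_zero_right, Set.mem_setOf_eq,
        EuclideanSpace.norm_eq]
      rw [← Real.sqrt_le_sqrt_iff hr]
      have : ∀ i, ((MeasurableEquiv.toLp 2 (Fin n → ℝ)) y) i = y i := fun i => rfl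
      simp [this]
    rw [hset, he.measure_preimage Metric.isClosed_closedBall.measurableSet.nullMeasurableSet,
      Measure.addHaar_closedBall _ _ (Real.sqrt_nonneg r), finrank_euclideanSpace_fin]
  · have hset : {y : Fin n → ℝ | ∑ i, (y i)^2 ≤ r} = ∅ := by
      ext y
      simp only [Set.mem_setOf_eq, Set.mem_empty_iff_false, iff_false, not_le]
      exact lt_of_lt_of_le hr (Finset.sum_nonneg fun i _ => sq_nonneg _)
    rw [hset, Real.sqrt_eq_zero_of_nonpos hr.le, zero_pow (by omega), measure_empty,
      ENNReal.ofReal_zero, zero_mul]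

lemma cap_vol (m : ℕ) (t : ℝ) :
    volume {x : EuclideanSpace ℝ (Fin (m+2)) | ‖x‖ ≤ 1 ∧ t ≤ x 0}
      = volume (Metric.ball (0 : EuclideanSpace ℝ (Fin (m+1))) 1) *
        ∫⁻ s in Set.Ici t, ENNReal.ofReal (Real.sqrt (1 - s^2) ^ (m+1)) := by
  set B := volume (Metric.ball (0 : EuclideanSpace ℝ (Fin (m+1))) 1) with hB
  set T : Set (ℝ × (Fin (m+1) → ℝ)) := {p | t ≤ p.1 ∧ p.1^2 + ∑ i, (p.2 i)^2 ≤ 1} with hTdef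
  have hTmeas : MeasurableSet T := by
    apply MeasurableSet.inter
    · exact measurableSet_le measurable_const measurable_fst
    · exact measurableSet_le ((measurable_fst.pow_const 2).add
        (Finset.measurable_sum _ fun i _ => ((measurable_pi_apply i).comp measurable_snd).pow_const 2)) measurable_const
  -- the composite measure preserving map
  have he1 := EuclideanSpace.volume_preserving_symm_measurableEquiv_toLp (Fin (m+2))
  have he2 := MeasureTheory.volume_preserving_piFinSuccAbove (fun _ : Fin (m+2) => ℝ) 0
  have he := he2.comp he1
  have hpre : (⇑(MeasurableEquiv.piFinSuccAbove (fun _ : Fin (m+2) => ℝ) 0)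
      ∘ ⇑(MeasurableEquiv.toLp 2 (Fin (m+2) → ℝ)).symm) ⁻¹' T
      = {x : EuclideanSpace ℝ (Fin (m+2)) | ‖x‖ ≤ 1 ∧ t ≤ x 0} := by
    ext x
    have hx0 : ((MeasurableEquiv.piFinSuccAbove (fun _ : Fin (m+2) => ℝ) 0)
        ((MeasurableEquiv.toLp 2 (Fin (m+2) → ℝ)).symm x)).1 = x 0 := rfl
    have hxi : ∀ i : Fin (m+1), ((MeasurableEquiv.piFinSuccAbove (fun _ : Fin (m+2) => ℝ) 0)
        ((MeasurableEquiv.toLp 2 (Fin (m+2) → ℝ)).symm x)).2 i = x ((0 : Fin (m+2)).succAbove i) := fun i => rfl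
    simp only [Set.mem_preimage, Function.comp_apply, hTdef, Set.mem_setOf_eq, hx0, hxi]
    have hnorm : ‖x‖ ≤ 1 ↔ ∑ i, (x i)^2 ≤ 1 := by
      rw [EuclideanSpace.norm_eq, show (1:ℝ) = Real.sqrt 1 by simp,
        Real.sqrt_le_sqrt_iff (by positivity)]
      simp [sq_abs]
    have hsum : ∑ i, (x i)^2 = (x 0)^2 + ∑ i : Fin (m+1), (x ((0:Fin (m+2)).succAbove i))^2 :=
      Fin.sum_univ_succAbove (fun i => (x i)^2) 0
    rw [hnorm, hsum]
    tauto
  rw [← hpre, he.measure_preimage hTmeas.nullMeasurableSet]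
  rw [MeasureTheory.Measure.volume_eq_prod, Measure.prod_apply hTmeas]
  have hslice : ∀ s : ℝ, volume (Prod.mk s ⁻¹' T)
      = Set.indicator (Set.Ici t) (fun s => ENNReal.ofReal (Real.sqrt (1 - s^2) ^ (m+1)) * B) s := by
    intro s
    rcases le_or_gt t s with hs | hs
    · rw [Set.indicator_of_mem (Set.mem_Ici.2 hs)]
      have : Prod.mk s ⁻¹' T = {y : Fin (m+1) → ℝ | ∑ i, (y i)^2 ≤ 1 - s^2} := by
        ext y
        simp only [Set.mem_preimage, hTdef, Set.mem_setOf_eq]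
        constructor
        · rintro ⟨-, h⟩; linarith
        · intro h; exact ⟨hs, by linarith⟩
      rw [this, sumsq_ball_vol (m+1) (by omega)]
    · rw [Set.indicator_of_notMem (by simpa using hs)]
      have : Prod.mk s ⁻¹' T = ∅ := by
        ext y
        simp only [Set.mem_preimage, hTdef, Set.mem_setOf_eq, Set.mem_empty_iff_false, iff_false]
        rintro ⟨h, -⟩; linarith
      rw [this, measure_empty]
  simp only [hslice]
  rw [lintegral_indicator measurableSet_Ici]
  rw [lintegral_mul_const' B _ (by exact (measure_ball_lt_top).ne), mul_comm]

lemma cap_integral_le (n : ℕ) (hn : 1 ≤ n) (t : ℝ) (ht : 0 < t) :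
    ∫⁻ s in Set.Ici t, ENNReal.ofReal (Real.sqrt (1 - s^2) ^ n)
      ≤ ENNReal.ofReal (Real.exp (-(n:ℝ)*t^2/2) / ((n:ℝ)*t)) := by
  have hn0 : (0:ℝ) < n := by exact_mod_cast hn
  -- pointwise bound 1
  have hpt : ∀ s : ℝ, Real.sqrt (1 - s^2) ^ n ≤ Real.exp (-(n:ℝ)*s^2/2) := by
    intro s
    have h1 : Real.sqrt (1 - s^2) ≤ Real.exp (-s^2/2) := by
      rcases le_or_gt (1 - s^2) 0 with h | h
      · rw [Real.sqrt_eq_zero_of_nonpos h]; positivity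
      · have : (1 - s^2) ≤ Real.exp (-s^2) := by
          have := Real.add_one_le_exp (-s^2); linarith
        calc Real.sqrt (1 - s^2) ≤ Real.sqrt (Real.exp (-s^2)) := Real.sqrt_le_sqrt this
          _ = Real.exp (-s^2/2) := by
              rw [show (-s^2/2) = (-s^2)/2 by ring]
              exact (Real.exp_half _).symm
    calc Real.sqrt (1 - s^2) ^ n ≤ (Real.exp (-s^2/2)) ^ n :=
          pow_le_pow_left₀ (Real.sqrt_nonneg _) h1 n
      _ = Real.exp (-(n:ℝ)*s^2/2) := by
          rw [← Real.exp_nat_mul]; ring_nf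
  -- antiderivative
  set F : ℝ → ℝ := fun u => -((n:ℝ)*t)⁻¹ * Real.exp (-(n:ℝ)*u^2/2) with hF
  have hderiv : ∀ s : ℝ, HasDerivAt F (s/t * Real.exp (-(n:ℝ)*s^2/2)) s := by
    intro s
    have h1 : HasDerivAt (fun u : ℝ => -(n:ℝ)*u^2/2) (-(n:ℝ)*s) s := by
      have h2 : HasDerivAt (fun u : ℝ => u^2) (2*s) s := by simpa using hasDerivAt_pow 2 s
      have h3 := (h2.const_mul (-(n:ℝ))).div_const 2
      exact h3.congr_deriv (by ring)
    have h4 := (h1.exp).const_mul (-((n:ℝ)*t)⁻¹)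
    exact h4.congr_deriv (by field_simp)
  have htend : Tendsto F atTop (nhds 0) := by
    have h5 : Tendsto (fun s : ℝ => -(n:ℝ)*s^2/2) atTop atBot := by
      apply Filter.Tendsto.atBot_div_const (by norm_num : (0:ℝ) < 2)
      apply Filter.Tendsto.const_mul_atTop_of_neg (by linarith : -(n:ℝ) < 0)
      exact tendsto_pow_atTop (by norm_num)
    have h6 := (Real.tendsto_exp_atBot.comp h5).const_mul (-((n:ℝ)*t)⁻¹)
    rw [mul_zero] at h6
    exact h6
  have hcont : ContinuousWithinAt F (Set.Ici t) t := (hderiv t).continuousAt.continuousWithinAt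
  have hderivIoi : ∀ s ∈ Set.Ioi t, HasDerivAt F (s/t * Real.exp (-(n:ℝ)*s^2/2)) s :=
    fun s _ => hderiv s
  have hnonneg : ∀ s ∈ Set.Ioi t, 0 ≤ s/t * Real.exp (-(n:ℝ)*s^2/2) := by
    intro s hs
    have : 0 < s := lt_trans ht hs
    positivity
  have hint : IntegrableOn (fun s => s/t * Real.exp (-(n:ℝ)*s^2/2)) (Set.Ioi t) volume :=
    integrableOn_Ioi_deriv_of_nonneg hcont hderivIoi hnonneg htend
  have hval : ∫ s in Set.Ioi t, s/t * Real.exp (-(n:ℝ)*s^2/2)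
      = Real.exp (-(n:ℝ)*t^2/2) / ((n:ℝ)*t) := by
    rw [integral_Ioi_of_hasDerivAt_of_tendsto hcont hderivIoi hint htend, hF]
    field_simp
    ring
  calc ∫⁻ s in Set.Ici t, ENNReal.ofReal (Real.sqrt (1 - s^2) ^ n)
      = ∫⁻ s in Set.Ioi t, ENNReal.ofReal (Real.sqrt (1 - s^2) ^ n) := by
        rw [Measure.restrict_congr_set Ioi_ae_eq_Ici]
    _ ≤ ∫⁻ s in Set.Ioi t, ENNReal.ofReal (s/t * Real.exp (-(n:ℝ)*s^2/2)) := by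
        apply setLIntegral_mono_ae
        · apply Measurable.aemeasurable
          fun_prop
        · filter_upwards with s hs
          apply ENNReal.ofReal_le_ofReal
          have h7 : (1:ℝ) ≤ s/t := (one_le_div ht).2 (le_of_lt hs)
          calc Real.sqrt (1 - s^2) ^ n ≤ Real.exp (-(n:ℝ)*s^2/2) := hpt s
            _ ≤ s/t * Real.exp (-(n:ℝ)*s^2/2) := le_mul_of_one_le_left (by positivity) h7
    _ = ENNReal.ofReal (Real.exp (-(n:ℝ)*t^2/2) / ((n:ℝ)*t)) := by
        rw [← ofReal_integral_eq_lintegral_ofReal hint]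
        · rw [hval]
        · filter_upwards [ae_restrict_mem measurableSet_Ioi] with s hs
          exact hnonneg s hs

lemma hemi_integral_ge (n : ℕ) (hn : 1 ≤ n) :
    ENNReal.ofReal ((5/6) * (Real.sqrt (2*n))⁻¹)
      ≤ ∫⁻ s in Set.Ici (0:ℝ), ENNReal.ofReal (Real.sqrt (1 - s^2) ^ n) := by
  have hn1 : (1:ℝ) ≤ n := by exact_mod_cast hn
  have hn0 : (0:ℝ) < n := by linarith
  set h : ℝ := (Real.sqrt (2*n))⁻¹ with hh
  have h2n : (1:ℝ) ≤ 2*n := by linarith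
  have hs2n : (1:ℝ) ≤ Real.sqrt (2*n) := by
    rw [show (1:ℝ) = Real.sqrt 1 by simp]
    exact Real.sqrt_le_sqrt h2n
  have hhpos : 0 < h := by rw [hh]; positivity
  have hh1 : h ≤ 1 := by rw [hh]; exact inv_le_one_of_one_le₀ hs2n
  have hhsq : h^2 = (2*(n:ℝ))⁻¹ := by
    rw [hh, ← Real.sqrt_inv, Real.sq_sqrt (by positivity)]
  have hkey : (n:ℝ) * (2*(n:ℝ))⁻¹ = 1/2 := by
    field_simp
  -- pointwise bound on Icc 0 h
  have hpt : ∀ s ∈ Set.Icc (0:ℝ) h, (1 - n*s^2) ≤ Real.sqrt (1 - s^2) ^ n := by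
    intro s hs
    have hs0 := hs.1
    have hsh := hs.2
    have hs1 : s ≤ 1 := le_trans hsh hh1
    have hssq : s^2 ≤ 1 := by nlinarith
    have hpos : (0:ℝ) ≤ 1 - s^2 := by nlinarith
    have h1 : 1 - (n:ℝ)*s^2 ≤ (1 - s^2)^n := by
      have hb := one_add_mul_le_pow (a := -s^2) (by nlinarith) n
      calc 1 - (n:ℝ)*s^2 = 1 + n * (-s^2) := by ring
        _ ≤ (1 + -s^2)^n := hb
        _ = (1 - s^2)^n := by ring_nf
    have h2 : (1 - s^2)^n ≤ Real.sqrt (1 - s^2) ^ n := by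
      apply pow_le_pow_left₀ hpos
      calc 1 - s^2 = Real.sqrt ((1-s^2)^2) := (Real.sqrt_sq hpos).symm
        _ ≤ Real.sqrt (1-s^2) := Real.sqrt_le_sqrt (by nlinarith)
    linarith
  -- integral computation
  have hIcc : ∫ s in Set.Icc (0:ℝ) h, (1 - (n:ℝ)*s^2) = (5/6) * h := by
    rw [MeasureTheory.integral_Icc_eq_integral_Ioc,
      ← intervalIntegral.integral_of_le hhpos.le]
    rw [intervalIntegral.integral_sub intervalIntegrable_const
      ((intervalIntegral.intervalIntegrable_pow 2).const_mul _)]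
    rw [intervalIntegral.integral_const_mul, integral_pow]
    simp only [intervalIntegral.integral_const, smul_eq_mul, mul_one]
    rw [show h^(2+1) = h * h^2 by ring, hhsq]
    push_cast
    have hne : (n:ℝ) ≠ 0 := hn0.ne'
    have hsne : Real.sqrt (2*(n:ℝ)) ≠ 0 := by positivity
    field_simp
    ring
  calc ENNReal.ofReal ((5/6) * h)
      = ∫⁻ s in Set.Icc (0:ℝ) h, ENNReal.ofReal (1 - (n:ℝ)*s^2) := by
        rw [← hIcc]
        apply ofReal_integral_eq_lintegral_ofReal
        · exact (continuous_const.sub (continuous_const.mul (continuous_pow 2))).integrableOn_Icc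
        · filter_upwards [ae_restrict_mem measurableSet_Icc] with s hs
          have hs2 : s^2 ≤ h^2 := by nlinarith [hs.1, hs.2]
          rw [hhsq] at hs2
          have hns : (n:ℝ) * s^2 ≤ 1/2 := by
            rw [← hkey]
            nlinarith
          show (0:ℝ) ≤ 1 - (n:ℝ)*s^2
          linarith
    _ ≤ ∫⁻ s in Set.Icc (0:ℝ) h, ENNReal.ofReal (Real.sqrt (1 - s^2) ^ n) := by
        apply setLIntegral_mono_ae
        · apply Measurable.aemeasurable; fun_prop
        · filter_upwards with s hs
          exact ENNReal.ofReal_le_ofReal (hpt s hs)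
    _ ≤ ∫⁻ s in Set.Ici (0:ℝ), ENNReal.ofReal (Real.sqrt (1 - s^2) ^ n) :=
        lintegral_mono_set (fun s hs => hs.1)

/-- For any `c > 0`, the fraction of the volume of the unit hemisphere in
ℝ^d (d ≥ 2) above the hyperplane `x_1 = c/√(d−1)` is less than `(2/c)·e^{−c²/2}`. -/
theorem hemisphere_volume_above_slab (d : ℕ) (hd : 2 ≤ d) (c : ℝ) (hc : 0 < c) :
    (volume {x : EuclideanSpace ℝ (Fin d) | ‖x‖ ≤ 1 ∧
        c / Real.sqrt ((d : ℝ) - 1) ≤ x ⟨0, by omega⟩}).toReal /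
      (volume {x : EuclideanSpace ℝ (Fin d) | ‖x‖ ≤ 1 ∧ 0 ≤ x ⟨0, by omega⟩}).toReal
      < (2 / c) * Real.exp (-c ^ 2 / 2) := by
  obtain ⟨m, rfl⟩ : ∃ m, d = m + 2 := ⟨d - 2, by omega⟩
  have hcast : ((m + 2 : ℕ) : ℝ) - 1 = ((m + 1 : ℕ) : ℝ) := by push_cast; ring
  simp only [Fin.mk_zero, hcast]
  set n : ℕ := m + 1 with hn
  have hn1 : (1:ℝ) ≤ n := by exact_mod_cast Nat.le_add_left 1 m
  have hn0 : (0:ℝ) < n := by linarith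
  set sn : ℝ := Real.sqrt n with hsn
  have hsn1 : 1 ≤ sn := by
    rw [hsn, show (1:ℝ) = Real.sqrt 1 by simp]
    exact Real.sqrt_le_sqrt hn1
  have hsn0 : 0 < sn := by linarith
  have hsnsq : sn^2 = n := Real.sq_sqrt hn0.le
  set t : ℝ := c / sn with htdef
  have ht : 0 < t := by positivity
  set B := volume (Metric.ball (0 : EuclideanSpace ℝ (Fin (m+1))) 1) with hB
  have hBne : B ≠ 0 := (Metric.measure_ball_pos _ _ one_pos).ne'
  have hBtop : B ≠ ⊤ := measure_ball_lt_top.ne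
  have hBt : 0 < B.toReal := ENNReal.toReal_pos hBne hBtop
  set e : ℝ := Real.exp (-c^2/2) with he
  have hepos : 0 < e := Real.exp_pos _
  -- numerator
  have hNle : (volume {x : EuclideanSpace ℝ (Fin (m+2)) | ‖x‖ ≤ 1 ∧ t ≤ x 0}).toReal
      ≤ B.toReal * (e / (sn * c)) := by
    have h1 := cap_vol m t
    have h2 : volume {x : EuclideanSpace ℝ (Fin (m+2)) | ‖x‖ ≤ 1 ∧ t ≤ x 0}
        ≤ B * ENNReal.ofReal (e / (sn * c)) := by
      rw [h1]
      apply mul_le_mul_right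
      have h3 := cap_integral_le n (by omega) t ht
      have h4 : Real.exp (-(n:ℝ)*t^2/2) = e := by
        rw [he, htdef]
        congr 1
        rw [div_pow, hsnsq]
        field_simp
      have h5 : (n:ℝ)*t = sn * c := by
        rw [htdef]
        rw [show (n:ℝ) = sn * sn by rw [← hsnsq]; ring]
        field_simp
      rw [h4, h5] at h3
      exact h3
    calc (volume {x : EuclideanSpace ℝ (Fin (m+2)) | ‖x‖ ≤ 1 ∧ t ≤ x 0}).toReal
        ≤ (B * ENNReal.ofReal (e / (sn * c))).toReal := by
          apply ENNReal.toReal_mono _ h2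
          exact ENNReal.mul_ne_top hBtop ENNReal.ofReal_ne_top
      _ = B.toReal * (e / (sn * c)) := by
          rw [ENNReal.toReal_mul, ENNReal.toReal_ofReal (by positivity)]
  -- denominator
  have hDtop : volume {x : EuclideanSpace ℝ (Fin (m+2)) | ‖x‖ ≤ 1 ∧ 0 ≤ x 0} ≠ ⊤ := by
    refine ne_of_lt (lt_of_le_of_lt (measure_mono ?_)
      (measure_closedBall_lt_top : volume (Metric.closedBall (0:EuclideanSpace ℝ (Fin (m+2))) 1) < ⊤))
    intro x hx
    simpa [Metric.mem_closedBall] using hx.1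
  have hDge : B.toReal * ((5/6) * (Real.sqrt (2*n))⁻¹)
      ≤ (volume {x : EuclideanSpace ℝ (Fin (m+2)) | ‖x‖ ≤ 1 ∧ 0 ≤ x 0}).toReal := by
    have h1 := cap_vol m 0
    have h2 : B * ENNReal.ofReal ((5/6) * (Real.sqrt (2*n))⁻¹)
        ≤ volume {x : EuclideanSpace ℝ (Fin (m+2)) | ‖x‖ ≤ 1 ∧ 0 ≤ x 0} := by
      rw [h1]
      exact mul_le_mul_right (hemi_integral_ge n (by omega)) B
    calc B.toReal * ((5/6) * (Real.sqrt (2*n))⁻¹)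
        = (B * ENNReal.ofReal ((5/6) * (Real.sqrt (2*n))⁻¹)).toReal := by
          rw [ENNReal.toReal_mul, ENNReal.toReal_ofReal (by positivity)]
      _ ≤ _ := ENNReal.toReal_mono hDtop h2
  -- combine
  have hs2 : Real.sqrt (2*(n:ℝ)) = Real.sqrt 2 * sn := by
    rw [hsn, ← Real.sqrt_mul (by norm_num)]
  have hs2pos : (0:ℝ) < Real.sqrt 2 := by positivity
  have hDlb : (0:ℝ) < B.toReal * ((5/6) * (Real.sqrt (2*n))⁻¹) := by
    apply mul_pos hBt
    positivity
  have hmain : (volume {x : EuclideanSpace ℝ (Fin (m+2)) | ‖x‖ ≤ 1 ∧ t ≤ x 0}).toReal /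
      (volume {x : EuclideanSpace ℝ (Fin (m+2)) | ‖x‖ ≤ 1 ∧ 0 ≤ x 0}).toReal
      ≤ (B.toReal * (e / (sn * c))) / (B.toReal * ((5/6) * (Real.sqrt (2*n))⁻¹)) :=
    div_le_div₀ (by positivity) hNle hDlb hDge
  refine lt_of_le_of_lt hmain ?_
  rw [mul_div_mul_left _ _ hBt.ne']
  have hsqrt2 : Real.sqrt 2 ^ 2 = 2 := Real.sq_sqrt (by norm_num)
  have hk : (3:ℝ) * Real.sqrt 2 < 5 := by nlinarith [Real.sqrt_nonneg 2]
  rw [hs2]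
  rw [div_lt_iff₀ (by positivity), div_lt_iff₀ (by positivity : (0:ℝ) < sn * c)]
  rw [show 2 / c * e * (5 / 6 * (Real.sqrt 2 * sn)⁻¹) * (sn * c)
      = (5 / (3 * Real.sqrt 2)) * e by field_simp; ring]
  have hq : 5 / (3*Real.sqrt 2) * e * (3*Real.sqrt 2) = 5 * e := by field_simp
  nlinarith [hq, mul_lt_mul_of_pos_left hk hepos, hs2pos]
end

section
/- For a d-dimensional spherical Gaussian with identity covariance, for any c > 0, all but at most (4/c²)·e^{−c²/4} of its probability mass lies in the annulus √(d−1) − c ≤ ‖x‖ ≤ √(d−1) + c. -/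
open MeasureTheory ProbabilityTheory Real
open scoped ENNReal NNReal

section Aux

lemma gauss_smul_eq (t x : ℝ) : (gaussianPDFReal 0 1 x).toNNReal • Real.exp (t * x^2)
    = (Real.sqrt (2 * π))⁻¹ * Real.exp (-(1/2 - t) * x^2) := by
  rw [NNReal.smul_def, Real.coe_toNNReal _ (gaussianPDFReal_nonneg 0 1 x)]
  rw [gaussianPDFReal]
  push_cast
  rw [mul_one, smul_eq_mul, mul_assoc, ← Real.exp_add]
  ring_nf

lemma gauss_pdf_eq : (gaussianPDF 0 1) = fun x => ((gaussianPDFReal 0 1 x).toNNReal : ℝ≥0∞) := by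
  ext x; rw [gaussianPDF_def]; rfl

lemma gauss_sq_integral {t : ℝ} (ht : t < 1/2) :
    ∫ x, Real.exp (t * x ^ 2) ∂(gaussianReal 0 1) = (Real.sqrt (1 - 2*t))⁻¹ := by
  have hpos : 0 < 1/2 - t := by linarith
  rw [gaussianReal_of_var_ne_zero 0 one_ne_zero, gauss_pdf_eq]
  rw [integral_withDensity_eq_integral_smul ((measurable_gaussianPDFReal 0 1).real_toNNReal) _]
  simp_rw [gauss_smul_eq]
  rw [integral_const_mul, integral_gaussian]
  have h2 : Real.sqrt (2*π) = Real.sqrt 2 * Real.sqrt π := Real.sqrt_mul (by norm_num) _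
  have h3 : Real.sqrt (π/(1/2-t)) = Real.sqrt π / Real.sqrt (1/2-t) := Real.sqrt_div pi_nonneg _
  have h4 : (1:ℝ) - 2*t = 2*(1/2-t) := by ring
  rw [h2, h3, h4, Real.sqrt_mul (by norm_num : (0:ℝ) ≤ 2)]
  have hπ : 0 < Real.sqrt π := Real.sqrt_pos.2 pi_pos
  have hst : 0 < Real.sqrt (1/2-t) := Real.sqrt_pos.2 hpos
  have h2' : 0 < Real.sqrt 2 := by positivity
  have h6 : 0 < Real.sqrt (1 - 2*t) := by rw [h4]; positivity
  field_simp

lemma gauss_sq_integrable {t : ℝ} (ht : t < 1/2) :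
    Integrable (fun x : ℝ => Real.exp (t * x ^ 2)) (gaussianReal 0 1) := by
  have hpos : 0 < 1/2 - t := by linarith
  rw [gaussianReal_of_var_ne_zero 0 one_ne_zero, gauss_pdf_eq]
  rw [integrable_withDensity_iff_integrable_smul
    ((measurable_gaussianPDFReal 0 1).real_toNNReal)]
  simp_rw [gauss_smul_eq]
  exact (integrable_exp_neg_mul_sq hpos).const_mul _

lemma pi_integral_pow {ν : Measure ℝ} [SigmaFinite ν] (d : ℕ) (f : ℝ → ℝ) :
    ∫ x : Fin d → ℝ, ∏ i, f (x i) ∂(Measure.pi fun _ : Fin d => ν) = (∫ y, f y ∂ν) ^ d := by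
  letI : MeasureSpace ℝ := { volume := ν }
  haveI : SigmaFinite (volume : Measure ℝ) := ‹SigmaFinite ν›
  have h := MeasureTheory.integral_fintype_prod_eq_pow (ι := Fin d) (μ := ν) f
  rw [Fintype.card_fin] at h
  exact h

lemma pi_integrable_prod {ν : Measure ℝ} [SigmaFinite ν] (d : ℕ) {f : ℝ → ℝ}
    (hf : Integrable f ν) :
    Integrable (fun x : Fin d → ℝ => ∏ i, f (x i)) (Measure.pi fun _ : Fin d => ν) := by
  letI : MeasureSpace ℝ := { volume := ν }
  haveI : SigmaFinite (volume : Measure ℝ) := ‹SigmaFinite ν›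
  exact Integrable.fintype_prod (f := fun _ : Fin d => f) (fun _ => hf)

lemma exp_sum_sq_eq (d : ℕ) (t : ℝ) (x : Fin d → ℝ) :
    Real.exp (t * ∑ i, x i ^ 2) = ∏ i, Real.exp (t * (x i)^2) := by
  rw [Finset.mul_sum, Real.exp_sum]

lemma mgf_sum_sq (d : ℕ) {t : ℝ} (ht : t < 1/2) :
    ∫ x : Fin d → ℝ, Real.exp (t * ∑ i, x i ^ 2) ∂(Measure.pi fun _ : Fin d => gaussianReal 0 1)
      = ((Real.sqrt (1 - 2*t))⁻¹) ^ d := by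
  have h := pi_integral_pow (ν := gaussianReal 0 1) d (fun y => Real.exp (t * y ^ 2))
  rw [gauss_sq_integral ht] at h
  simp_rw [exp_sum_sq_eq]
  exact h

lemma int_sum_sq (d : ℕ) {t : ℝ} (ht : t < 1/2) :
    Integrable (fun x : Fin d → ℝ => Real.exp (t * ∑ i, x i ^ 2))
      (Measure.pi fun _ : Fin d => gaussianReal 0 1) := by
  simp_rw [exp_sum_sq_eq]
  exact pi_integrable_prod d (gauss_sq_integrable ht)

set_option maxHeartbeats 1000000 in
lemma chernoff_up (d : ℕ) {t : ℝ} (ht0 : 0 ≤ t) (ht : t < 1/2) (a : ℝ) :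
    (Measure.pi fun _ : Fin d => gaussianReal 0 1) {x | a ≤ ∑ i, x i ^ 2}
      ≤ ENNReal.ofReal (Real.exp (-t * a) * ((Real.sqrt (1 - 2*t))⁻¹) ^ d) := by
  set μ := Measure.pi fun _ : Fin d => gaussianReal 0 1 with hμ
  haveI : IsProbabilityMeasure μ := by rw [hμ]; infer_instance
  have h := @measure_ge_le_exp_mul_mgf (Fin d → ℝ) _ (fun x => ∑ i, x i ^ 2) μ t _ a ht0 (int_sum_sq d ht)
  have hm : mgf (fun x : Fin d → ℝ => ∑ i, x i ^ 2) μ t = ((Real.sqrt (1 - 2*t))⁻¹) ^ d :=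
    mgf_sum_sq d ht
  rw [hm] at h
  rw [ENNReal.le_ofReal_iff_toReal_le (measure_ne_top μ _) (by positivity)]
  exact h

set_option maxHeartbeats 1000000 in
lemma chernoff_low (d : ℕ) {t : ℝ} (ht0 : t ≤ 0) (b : ℝ) :
    (Measure.pi fun _ : Fin d => gaussianReal 0 1) {x | ∑ i, x i ^ 2 ≤ b}
      ≤ ENNReal.ofReal (Real.exp (-t * b) * ((Real.sqrt (1 - 2*t))⁻¹) ^ d) := by
  set μ := Measure.pi fun _ : Fin d => gaussianReal 0 1 with hμ
  have ht : t < 1/2 := by linarith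
  haveI : IsProbabilityMeasure μ := by rw [hμ]; infer_instance
  have h := @measure_le_le_exp_mul_mgf (Fin d → ℝ) _ (fun x => ∑ i, x i ^ 2) μ t _ b ht0 (int_sum_sq d ht)
  have hm : mgf (fun x : Fin d → ℝ => ∑ i, x i ^ 2) μ t = ((Real.sqrt (1 - 2*t))⁻¹) ^ d :=
    mgf_sum_sq d ht
  rw [hm] at h
  rw [ENNReal.le_ofReal_iff_toReal_le (measure_ne_top μ _) (by positivity)]
  exact h

lemma log_le_half_sub {x : ℝ} (hx : 1 ≤ x) : Real.log x ≤ (x - x⁻¹)/2 := by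
  rcases eq_or_lt_of_le hx with h|h
  · simp [← h]
  · have hl : 0 < Real.log x := Real.log_pos h
    have h2 := (Real.self_lt_sinh_iff.2 hl).le
    rwa [Real.sinh_eq, Real.exp_log (by linarith), Real.exp_neg, Real.exp_log (by linarith)] at h2

lemma log_ge_one_sub_inv {y : ℝ} (hy : 0 < y) : 1 - y⁻¹ ≤ Real.log y := by
  have := Real.log_le_sub_one_of_pos (inv_pos.2 hy)
  rw [Real.log_inv] at this
  linarith

lemma log_half_sq_le {c : ℝ} (hc : 0 < c) (hc2 : 2 ≤ c^2) :
    Real.log (c^2/2) ≤ (442/625)*(c^2-2)/c := by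
  set q := Real.sqrt (c^2/2) with hq
  have hq2 : q^2 = c^2/2 := Real.sq_sqrt (by positivity)
  have hq1 : 1 ≤ q := by
    rw [hq]
    rw [show (1:ℝ) = Real.sqrt 1 by simp]
    exact Real.sqrt_le_sqrt (by linarith)
  have hq0 : 0 < q := by linarith
  have h1 : Real.log (c^2/2) = 2 * Real.log q := by
    rw [hq, Real.log_sqrt (by positivity)]; ring
  have h2 : Real.log q ≤ (q - q⁻¹)/2 := log_le_half_sub hq1
  have h3 : q - q⁻¹ = (c^2-2)/(2*q) := by
    field_simp
    nlinarith [hq2]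
  have h4 : (c^2-2)/(2*q) ≤ (442/625)*(c^2-2)/c := by
    rw [div_le_div_iff₀ (by positivity) hc]
    have hcq : c ≤ (884/625) * q := by
      nlinarith [hq2, sq_nonneg (c - (884/625)*q)]
    nlinarith [mul_nonneg (sub_nonneg.2 hc2) (sub_nonneg.2 hcq)]
  calc Real.log (c^2/2) = 2 * Real.log q := h1
    _ ≤ 2 * ((q - q⁻¹)/2) := by linarith
    _ = (c^2-2)/(2*q) := by rw [h3]; ring
    _ ≤ _ := h4

lemma keyP {s c : ℝ} (hs : 1 ≤ s) (hc : 0 < c) (hc2 : 2 ≤ c^2) :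
    c^2/4 + (442/625)*(c^2-2)/c ≤ (2*c*s+c^2-1)*(2*c*s-1)/(4*s*(s+c)) := by
  rw [div_add_div _ _ (by norm_num) hc.ne', div_le_div_iff₀ (by positivity) (by positivity)]
  nlinarith [sq_nonneg (c-2), sq_nonneg (c*s-2), mul_nonneg (sub_nonneg.2 hs) (sub_nonneg.2 hc2),
    sq_nonneg (s-1), sq_nonneg (c-s), mul_pos hc (lt_of_lt_of_le one_pos hs),
    sq_nonneg (c*s - 2*s), sq_nonneg (c - 39/20),
    mul_nonneg (mul_nonneg (sub_nonneg.2 hs) (sub_nonneg.2 hc2)) hc.le,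
    mul_nonneg (sub_nonneg.2 hs) hc.le]

end Aux

lemma rhs_exp_eq {c : ℝ} (hc : 0 < c) :
    2/c^2 * Real.exp (-c^2/4) = Real.exp (-c^2/4 - Real.log (c^2/2)) := by
  rw [Real.exp_sub, Real.exp_log (by positivity)]
  field_simp

lemma pow_inv_sqrt_eq {D r : ℝ} (d : ℕ) (hD : 0 < D) (hr : 0 < r) (hd : (d:ℝ) = D) :
    ((Real.sqrt (D/r))⁻¹) ^ d = Real.exp ((D/2) * Real.log (r/D)) := by
  have h1 : (Real.sqrt (D/r))⁻¹ = Real.sqrt (r/D) := by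
    rw [show r/D = (D/r)⁻¹ by rw [inv_div], Real.sqrt_inv]
  have h2 : Real.sqrt (r/D) = Real.exp (Real.log (r/D) / 2) := by
    rw [← Real.log_sqrt (by positivity), Real.exp_log (Real.sqrt_pos.2 (by positivity))]
  rw [h1, h2, ← Real.exp_nat_mul, hd]
  ring_nf

lemma upper_num (d : ℕ) {s c : ℝ} (hs : 1 ≤ s) (hc : 0 < c) (hc2 : 2 ≤ c^2)
    (hD : (d:ℝ) = s^2 + 1) :
    Real.exp (-(((s+c)^2 - (d:ℝ))/(2*(s+c)^2)) * (s+c)^2) *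
      ((Real.sqrt (1 - 2*(((s+c)^2 - (d:ℝ))/(2*(s+c)^2))))⁻¹) ^ d
      ≤ 2/c^2 * Real.exp (-c^2/4) := by
  have hc1 : 1 ≤ c := by nlinarith
  set D := (d:ℝ) with hD'
  set a := (s+c)^2 with ha_def
  have ha : 0 < a := by positivity
  have hD0 : 0 < D := by rw [hD]; positivity
  have hcs : 0 < c*s := by positivity
  have hDa : D < a := by rw [hD, ha_def]; nlinarith
  have h1 : 1 - 2*((a - D)/(2*a)) = D/a := by field_simp; ring
  have hta : -((a - D)/(2*a)) * a = -(a-D)/2 := by field_simp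
  rw [h1, hta, pow_inv_sqrt_eq d hD0 ha hD'.symm, ← Real.exp_add, rhs_exp_eq hc,
    Real.exp_le_exp]
  -- key real inequality
  have hsqa : Real.sqrt a = s + c := by rw [ha_def, Real.sqrt_sq (by positivity)]
  have hsa : 0 < Real.sqrt a := by rw [hsqa]; positivity
  have hsD : 0 < Real.sqrt D := Real.sqrt_pos.2 hD0
  have haa : Real.sqrt a * Real.sqrt a = a := Real.mul_self_sqrt ha.le
  have hDD : Real.sqrt D * Real.sqrt D = D := Real.mul_self_sqrt hD0.le
  have hsqD_le : Real.sqrt D ≤ s + 1/(2*s) := by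
    have h' : D ≤ (s + 1/(2*s))^2 := by
      rw [hD]
      have hs0 : (0:ℝ) < s := by linarith
      have e1 : s * (1/(2*s)) = 1/2 := by field_simp
      nlinarith [sq_nonneg (1/(2*s)), e1]
    calc Real.sqrt D ≤ Real.sqrt ((s + 1/(2*s))^2) := Real.sqrt_le_sqrt h'
      _ = s + 1/(2*s) := Real.sqrt_sq (by positivity)
  have hlog : Real.log (a/D) ≤ (a - D)/(Real.sqrt a * Real.sqrt D) := by
    set q := Real.sqrt (a/D) with hq_def
    have hq2 : q^2 = a/D := Real.sq_sqrt (by positivity)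
    have hq1 : 1 ≤ q := by
      rw [hq_def, show (1:ℝ) = Real.sqrt 1 by simp]
      exact Real.sqrt_le_sqrt ((one_le_div hD0).2 hDa.le)
    have hq0 : 0 < q := by linarith
    have hlq : Real.log (a/D) = 2 * Real.log q := by
      rw [hq_def, Real.log_sqrt (by positivity)]; ring
    have h2 := log_le_half_sub hq1
    have hqd : q = Real.sqrt a / Real.sqrt D := by
      rw [hq_def, Real.sqrt_div ha.le]
    have h3 : q - q⁻¹ = (a - D)/(Real.sqrt a * Real.sqrt D) := by
      rw [hqd, inv_div, div_sub_div _ _ hsD.ne' hsa.ne', haa, hDD,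
        mul_comm (Real.sqrt D) (Real.sqrt a)]
    calc Real.log (a/D) = 2 * Real.log q := hlq
      _ ≤ 2 * ((q - q⁻¹)/2) := by linarith
      _ = q - q⁻¹ := by ring
      _ = _ := h3
  have hstep : D/2 * Real.log (a/D) ≤ (a - D) * Real.sqrt D / (2 * Real.sqrt a) := by
    have hm := mul_le_mul_of_nonneg_left hlog (by positivity : (0:ℝ) ≤ D/2)
    refine hm.trans_eq ?_
    have hfrac : D / (Real.sqrt a * Real.sqrt D) = Real.sqrt D / Real.sqrt a := by
      field_simp
      linear_combination (-1 : ℝ) * hDD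
    calc D/2 * ((a-D)/(Real.sqrt a * Real.sqrt D)) = (a-D)/2 * (D/(Real.sqrt a * Real.sqrt D)) := by
          ring
      _ = (a-D)/2 * (Real.sqrt D/Real.sqrt a) := by rw [hfrac]
      _ = (a-D)*Real.sqrt D/(2*Real.sqrt a) := by ring
  have hkey : c^2/4 + Real.log (c^2/2) ≤ (a - D)/2 - (a - D) * Real.sqrt D / (2 * Real.sqrt a) := by
    have haD : a - D = 2*c*s + c^2 - 1 := by rw [ha_def, hD]; ring
    have haD0 : 0 < a - D := by linarith
    have hdiff : (2*c*s-1)/(2*s) ≤ Real.sqrt a - Real.sqrt D := by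
      rw [hsqa]
      have hs0 : (0:ℝ) < s := by linarith
      have : (2*c*s-1)/(2*s) = c - 1/(2*s) := by field_simp
      linarith [hsqD_le, this.le, this.ge]
    have heq2 : (a - D)/2 - (a - D) * Real.sqrt D / (2 * Real.sqrt a)
        = (a - D) * (Real.sqrt a - Real.sqrt D) / (2 * Real.sqrt a) := by
      field_simp
    rw [heq2]
    have h5 : (a - D) * ((2*c*s-1)/(2*s)) ≤ (a - D) * (Real.sqrt a - Real.sqrt D) :=
      mul_le_mul_of_nonneg_left hdiff haD0.le
    have h6 : (a - D) * ((2*c*s-1)/(2*s)) / (2 * Real.sqrt a)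
        ≤ (a - D) * (Real.sqrt a - Real.sqrt D) / (2 * Real.sqrt a) :=
      (div_le_div_iff_of_pos_right (by positivity)).2 h5
    refine le_trans ?_ h6
    have hs0 : (0:ℝ) < s := by linarith
    calc c^2/4 + Real.log (c^2/2) ≤ c^2/4 + (442/625)*(c^2-2)/c := by
          linarith [log_half_sq_le hc hc2]
      _ ≤ (2*c*s+c^2-1)*(2*c*s-1)/(4*s*(s+c)) := keyP hs hc hc2
      _ = (a - D) * ((2*c*s-1)/(2*s)) / (2 * Real.sqrt a) := by
          rw [hsqa, haD]
          field_simp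
          ring_nf
          try exact Or.inl trivial
  linarith [hstep, hkey]

lemma log_quarter_sq {c : ℝ} (hc : 0 < c) (hc2 : 2 ≤ c^2) :
    Real.log (c^2/2) ≤ c^2/4 := by
  have h := log_half_sq_le hc hc2
  have : (442/625)*(c^2-2)/c ≤ c^2/4 := by
    rw [div_le_div_iff₀ hc (by norm_num)]
    nlinarith [sq_nonneg (c - 2), sq_nonneg (c*(c-2)), sq_nonneg (c - 59/31)]
  linarith

lemma lower_num (d : ℕ) {s c : ℝ} (hs : 1 ≤ s) (hc : 0 < c) (hc2 : 2 ≤ c^2) (hcs : c < s)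
    (hD : (d:ℝ) = s^2 + 1) :
    Real.exp (-(-(((d:ℝ) - (s-c)^2)/(2*(s-c)^2))) * (s-c)^2) *
      ((Real.sqrt (1 - 2*(-(((d:ℝ) - (s-c)^2)/(2*(s-c)^2)))))⁻¹) ^ d
      ≤ 2/c^2 * Real.exp (-c^2/4) := by
  set D := (d:ℝ) with hD'
  set b := (s-c)^2 with hb_def
  have hb : 0 < b := by rw [hb_def]; exact pow_pos (by linarith) 2
  have hD0 : 0 < D := by rw [hD]; positivity
  have hbD : b < D := by
    rw [hb_def, hD]
    nlinarith [mul_pos hc (sub_pos.2 hcs)]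
  have h1 : 1 - 2*(-((D - b)/(2*b))) = D/b := by field_simp; ring
  have hta : -(-((D - b)/(2*b))) * b = (D-b)/2 := by field_simp
  rw [h1, hta, pow_inv_sqrt_eq d hD0 hb hD'.symm, ← Real.exp_add, rhs_exp_eq hc,
    Real.exp_le_exp]
  have hsb : Real.sqrt b = s - c := by rw [hb_def, Real.sqrt_sq (by linarith)]
  have hsD_ge : s ≤ Real.sqrt D := by
    rw [show s = Real.sqrt (s^2) by rw [Real.sqrt_sq (by linarith)]]
    exact Real.sqrt_le_sqrt (by rw [hD]; linarith)
  have hsD : 0 < Real.sqrt D := lt_of_lt_of_le (by linarith) hsD_ge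
  have hsb0 : 0 ≤ Real.sqrt b := Real.sqrt_nonneg _
  have hbb : Real.sqrt b * Real.sqrt b = b := Real.mul_self_sqrt hb.le
  have hDD : Real.sqrt D * Real.sqrt D = D := Real.mul_self_sqrt hD0.le
  have hlogbD : Real.log (b/D) = - Real.log (D/b) := by rw [← Real.log_inv, inv_div]
  have hlogD : 2*(1 - Real.sqrt b/Real.sqrt D) ≤ Real.log (D/b) := by
    have hy : 0 < Real.sqrt (D/b) := Real.sqrt_pos.2 (by positivity)
    have h2 := log_ge_one_sub_inv hy
    have hsq : Real.sqrt (D/b) = Real.sqrt D / Real.sqrt b := Real.sqrt_div hD0.le _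
    have hlg : Real.log (D/b) = 2 * Real.log (Real.sqrt (D/b)) := by
      rw [Real.log_sqrt (by positivity)]; ring
    have hinv : (Real.sqrt (D/b))⁻¹ = Real.sqrt b/Real.sqrt D := by rw [hsq, inv_div]
    rw [hinv] at h2
    rw [hlg]
    linarith
  have hm2 : D/2 * (2*(1 - Real.sqrt b/Real.sqrt D)) = D - Real.sqrt D * Real.sqrt b := by
    field_simp
    linear_combination Real.sqrt b * hDD
  have hm1 : D - Real.sqrt D * Real.sqrt b ≤ D/2 * Real.log (D/b) := by
    have := mul_le_mul_of_nonneg_left hlogD (by positivity : (0:ℝ) ≤ D/2)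
    linarith [hm2 ▸ this]
  have hm3 : (D-b)/2 - (D - Real.sqrt D * Real.sqrt b)
      = -((Real.sqrt D - Real.sqrt b)^2)/2 := by
    linear_combination ((1:ℝ)/2) * hDD + ((1:ℝ)/2) * hbb
  have hge : c ≤ Real.sqrt D - Real.sqrt b := by rw [hsb]; linarith
  have hda : c^2 ≤ (Real.sqrt D - Real.sqrt b)^2 := by nlinarith
  have hlq := log_quarter_sq hc hc2
  have hmain : (D-b)/2 + D/2 * Real.log (b/D) ≤ -c^2/2 := by
    rw [hlogbD]
    linarith
  linarith


open MeasureTheory ProbabilityTheory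

/-- For a standard Gaussian in ℝ^d (d ≥ 2), for any `c > 0`, all but at
most `(4/c²)·e^{−c²/4}` of the probability mass lies in the annulus
`√(d−1) − c ≤ ‖x‖ ≤ √(d−1) + c`. -/
theorem gaussian_annulus (d : ℕ) (hd : 2 ≤ d) (c : ℝ) (hc : 0 < c) :
    (Measure.pi fun _ : Fin d => gaussianReal 0 1)
      {x : Fin d → ℝ | ¬ (Real.sqrt ((d : ℝ) - 1) - c ≤ Real.sqrt (∑ i, (x i) ^ 2) ∧
          Real.sqrt (∑ i, (x i) ^ 2) ≤ Real.sqrt ((d : ℝ) - 1) + c)}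
      ≤ ENNReal.ofReal ((4 / c ^ 2) * Real.exp (-c ^ 2 / 4)) := by
  set μ := Measure.pi fun _ : Fin d => gaussianReal 0 1 with hμ
  haveI : IsProbabilityMeasure μ := by rw [hμ]; infer_instance
  rcases lt_or_ge (c^2) 2 with hc2 | hc2
  · refine le_trans prob_le_one ?_
    rw [← ENNReal.ofReal_one]
    apply ENNReal.ofReal_le_ofReal
    have hexp : Real.exp (1/2) ≤ 2 := by
      have h1 : Real.exp (1/2) * Real.exp (1/2) = Real.exp 1 := by
        rw [← Real.exp_add]; norm_num
      nlinarith [Real.exp_one_lt_d9, Real.exp_pos (1/2)]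
    have h2 : (2:ℝ)⁻¹ ≤ Real.exp (-c^2/4) := by
      rw [show -c^2/4 = -(c^2/4) by ring, Real.exp_neg]
      have h3 : Real.exp (c^2/4) ≤ 2 := le_trans (Real.exp_le_exp.2 (by linarith)) hexp
      exact inv_anti₀ (Real.exp_pos _) h3
    have h3 : (2:ℝ) ≤ 4/c^2 := by
      rw [le_div_iff₀ (by positivity)]; linarith
    calc (1:ℝ) = 2 * 2⁻¹ := by norm_num
      _ ≤ (4/c^2) * Real.exp (-c^2/4) := mul_le_mul h3 h2 (by norm_num) (by positivity)
  · set s := Real.sqrt ((d:ℝ) - 1) with hs_def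
    have hd1 : (1:ℝ) ≤ (d:ℝ) - 1 := by
      have h2d : (2:ℝ) ≤ (d:ℝ) := by exact_mod_cast hd
      linarith
    have hs2 : s^2 = (d:ℝ) - 1 := Real.sq_sqrt (by linarith)
    have hs1 : 1 ≤ s := by
      nlinarith [hs2, Real.sqrt_nonneg ((d:ℝ)-1), hd1]
    have hD : (d:ℝ) = s^2 + 1 := by rw [hs2]; ring
    have hs0 : (0:ℝ) < s := by linarith
    have hcs0 : 0 < c*s := mul_pos hc hs0
    have haD : (d:ℝ) < (s+c)^2 := by nlinarith
    have hD0 : (0:ℝ) < (d:ℝ) := by rw [hD]; positivity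
    have hta0 : 0 ≤ ((s+c)^2 - (d:ℝ))/(2*(s+c)^2) := by
      apply div_nonneg (by linarith) (by positivity)
    have hta2 : ((s+c)^2 - (d:ℝ))/(2*(s+c)^2) < 1/2 := by
      rw [div_lt_iff₀ (by positivity)]
      linarith
    have hup : μ {x : Fin d → ℝ | (s+c)^2 ≤ ∑ i, x i ^ 2}
        ≤ ENNReal.ofReal (2/c^2 * Real.exp (-c^2/4)) := by
      refine (chernoff_up d hta0 hta2 ((s+c)^2)).trans (ENNReal.ofReal_le_ofReal ?_)
      exact upper_num d hs1 hc hc2 hD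
    have hsum_nonneg : ∀ x : Fin d → ℝ, (0:ℝ) ≤ ∑ i, x i ^ 2 :=
      fun x => Finset.sum_nonneg (fun i _ => sq_nonneg _)
    rcases lt_or_ge c s with hcs | hcs
    · have hb0 : (0:ℝ) < (s-c)^2 := pow_pos (by linarith) 2
      have htb0 : -(((d:ℝ) - (s-c)^2)/(2*(s-c)^2)) ≤ 0 := by
        apply neg_nonpos.2
        apply div_nonneg ?_ (by positivity)
        nlinarith [mul_pos hc (sub_pos.2 hcs)]
      have hlow : μ {x : Fin d → ℝ | ∑ i, x i ^ 2 ≤ (s-c)^2}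
          ≤ ENNReal.ofReal (2/c^2 * Real.exp (-c^2/4)) := by
        refine (chernoff_low d htb0 ((s-c)^2)).trans (ENNReal.ofReal_le_ofReal ?_)
        exact lower_num d hs1 hc hc2 hcs hD
      have hsubset : {x : Fin d → ℝ | ¬ (s - c ≤ Real.sqrt (∑ i, (x i) ^ 2) ∧
            Real.sqrt (∑ i, (x i) ^ 2) ≤ s + c)}
          ⊆ {x : Fin d → ℝ | (s+c)^2 ≤ ∑ i, x i ^ 2}
            ∪ {x : Fin d → ℝ | ∑ i, x i ^ 2 ≤ (s-c)^2} := by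
        intro x hx
        simp only [Set.mem_setOf_eq, not_and_or, not_le] at hx
        have hsq : (∑ i, x i ^ 2) = (Real.sqrt (∑ i, x i ^ 2))^2 :=
          (Real.sq_sqrt (hsum_nonneg x)).symm
        have hr0 : 0 ≤ Real.sqrt (∑ i, x i ^ 2) := Real.sqrt_nonneg _
        rcases hx with h | h
        · right
          simp only [Set.mem_setOf_eq]
          rw [hsq]
          nlinarith
        · left
          simp only [Set.mem_setOf_eq]
          rw [hsq]
          nlinarith [(by linarith : (0:ℝ) ≤ s + c)]
      calc μ _ ≤ μ ({x : Fin d → ℝ | (s+c)^2 ≤ ∑ i, x i ^ 2}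
            ∪ {x : Fin d → ℝ | ∑ i, x i ^ 2 ≤ (s-c)^2}) := measure_mono hsubset
        _ ≤ μ {x : Fin d → ℝ | (s+c)^2 ≤ ∑ i, x i ^ 2}
            + μ {x : Fin d → ℝ | ∑ i, x i ^ 2 ≤ (s-c)^2} := measure_union_le _ _
        _ ≤ ENNReal.ofReal (2/c^2 * Real.exp (-c^2/4))
            + ENNReal.ofReal (2/c^2 * Real.exp (-c^2/4)) := add_le_add hup hlow
        _ = ENNReal.ofReal ((4 / c ^ 2) * Real.exp (-c ^ 2 / 4)) := by
            rw [← ENNReal.ofReal_add (by positivity) (by positivity)]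
            congr 1
            ring
    · have hsubset : {x : Fin d → ℝ | ¬ (s - c ≤ Real.sqrt (∑ i, (x i) ^ 2) ∧
            Real.sqrt (∑ i, (x i) ^ 2) ≤ s + c)}
          ⊆ {x : Fin d → ℝ | (s+c)^2 ≤ ∑ i, x i ^ 2} := by
        intro x hx
        simp only [Set.mem_setOf_eq, not_and_or, not_le] at hx
        have hsq : (∑ i, x i ^ 2) = (Real.sqrt (∑ i, x i ^ 2))^2 :=
          (Real.sq_sqrt (hsum_nonneg x)).symm
        have hr0 : 0 ≤ Real.sqrt (∑ i, x i ^ 2) := Real.sqrt_nonneg _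
        rcases hx with h | h
        · exfalso; linarith
        · simp only [Set.mem_setOf_eq]
          rw [hsq]
          nlinarith [(by linarith : (0:ℝ) ≤ s + c)]
      calc μ _ ≤ μ {x : Fin d → ℝ | (s+c)^2 ≤ ∑ i, x i ^ 2} := measure_mono hsubset
        _ ≤ ENNReal.ofReal (2/c^2 * Real.exp (-c^2/4)) := hup
        _ ≤ ENNReal.ofReal ((4 / c ^ 2) * Real.exp (-c ^ 2 / 4)) := by
            apply ENNReal.ofReal_le_ofReal
            have h24 : (2:ℝ)/c^2 ≤ 4/c^2 := by gcongr <;> norm_num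
            exact mul_le_mul_of_nonneg_right h24 (Real.exp_pos _).le
end
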